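/- arXiv:2005.10675 — 3 statements merged into one kernel-verified Lean document; each statement's English description precedes it below -/
import Mathlib

section
/- Let f : R^d → R be convex, L > 0, and suppose f̃*(v) = f*(v) − (1/(2L))‖v‖² defines a convex function. Let η̃ > 0 satisfy η̃/L < 1. Then for all x, prox_{η̃ f̃*}(x) = prox_{(η̃^{-1} − L^{-1})^{-1} f*}((1 − η̃ L^{-1})^{-1} x). Consequently, (1 − η̃ L^{-1}) prox_{η̃ f̃*}(x) = x − η̃ · prox_{(η̃^{-1} − L^{-1}) f}(η̃^{-1} x). -/
open RealInnerProductSpace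

lemma limit_aux (A B C : ℝ) (hC : 0 ≤ C) (key : ∀ ε : ℝ, 0 < ε → ε ≤ 1 → A ≤ B + ε * C) :
    A ≤ B := by
  by_contra hcon
  push_neg at hcon
  have hAB : 0 < A - B := by linarith
  have hd : 0 < (A - B) / (2 * (C + 1)) := by positivity
  have hεpos : 0 < min 1 ((A - B) / (2 * (C + 1))) := lt_min one_pos hd
  have h1 := key _ hεpos (min_le_left _ _)
  have h2 : min 1 ((A - B) / (2 * (C + 1))) * C ≤ (A - B) / (2 * (C + 1)) * C :=
    mul_le_mul_of_nonneg_right (min_le_right _ _) hC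
  have h3 : (A - B) / (2 * (C + 1)) * C ≤ (A - B) / (2 * (C + 1)) * (C + 1) :=
    mul_le_mul_of_nonneg_left (by linarith) (le_of_lt hd)
  have h4 : (A - B) / (2 * (C + 1)) * (C + 1) = (A - B) / 2 := by
    field_simp; try ring
  linarith

lemma prox_subgrad {E : Type*} [NormedAddCommGroup E] [InnerProductSpace ℝ E]
    (h : E → ℝ) (hh : ConvexOn ℝ Set.univ h) (t : ℝ) (ht : 0 < t) (z m : E)
    (hm : IsMinOn (fun v => 1 / (2 * t) * ‖v - z‖ ^ 2 + h v) Set.univ m) :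
    ∀ v, h m + ⟪t⁻¹ • (z - m), v - m⟫ ≤ h v := by
  intro v
  have ht' : t ≠ 0 := ne_of_gt ht
  have key : ∀ ε : ℝ, 0 < ε → ε ≤ 1 →
      h m - h v ≤ t⁻¹ * ⟪m - z, v - m⟫ + ε * (‖v - m‖ ^ 2 / (2 * t)) := by
    intro ε hε hε1
    have hmem : m + ε • (v - m) = (1 - ε) • m + ε • v := by
      rw [smul_sub, sub_smul, one_smul]; abel
    have hconv : h (m + ε • (v - m)) ≤ (1 - ε) * h m + ε * h v := by
      rw [hmem]
      exact hh.2 (Set.mem_univ m) (Set.mem_univ v) (by linarith) (le_of_lt hε) (by ring)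
    have hmin := hm (Set.mem_univ (m + ε • (v - m)))
    simp only [Set.mem_setOf_eq] at hmin
    have hnorm : ‖m + ε • (v - m) - z‖ ^ 2
        = ‖m - z‖ ^ 2 + 2 * ε * ⟪m - z, v - m⟫ + ε ^ 2 * ‖v - m‖ ^ 2 := by
      have he : m + ε • (v - m) - z = (m - z) + ε • (v - m) := by abel
      rw [he, norm_add_sq_real, real_inner_smul_right, norm_smul, Real.norm_eq_abs,
        mul_pow, sq_abs]
      try ring
    set K := ⟪m - z, v - m⟫ with hK
    set N := ‖v - m‖ ^ 2 with hN
    have hstep : ε * (h m - h v) ≤ (2 * ε * K + ε ^ 2 * N) / (2 * t) := by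
      have h0 : 1 / (2 * t) * ‖m - z‖ ^ 2 + h m ≤
          1 / (2 * t) * (‖m - z‖ ^ 2 + 2 * ε * K + ε ^ 2 * N) + ((1 - ε) * h m + ε * h v) := by
        calc 1 / (2 * t) * ‖m - z‖ ^ 2 + h m ≤ _ := hmin
          _ ≤ _ := by rw [hnorm]; linarith
      have he2 : 1 / (2 * t) * (‖m - z‖ ^ 2 + 2 * ε * K + ε ^ 2 * N)
          - 1 / (2 * t) * ‖m - z‖ ^ 2 = (2 * ε * K + ε ^ 2 * N) / (2 * t) := by
        try ring
      linarith
    have he3 : (2 * ε * K + ε ^ 2 * N) / (2 * t)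
        = ε * (t⁻¹ * K + ε * (N / (2 * t))) := by
      field_simp; try ring
      try ring
    rw [he3] at hstep
    exact le_of_mul_le_mul_left hstep hε
  have hfin : h m - h v ≤ t⁻¹ * ⟪m - z, v - m⟫ :=
    limit_aux _ _ _ (by positivity) key
  have h5 : ⟪t⁻¹ • (z - m), v - m⟫ = t⁻¹ * ⟪z - m, v - m⟫ := real_inner_smul_left _ _ _
  have h6 : ⟪z - m, v - m⟫ = - ⟪m - z, v - m⟫ := by
    rw [← inner_neg_left]; congr 1; abel
  rw [h5, h6]
  linarith

lemma prox_suff {E : Type*} [NormedAddCommGroup E] [InnerProductSpace ℝ E]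
    (h : E → ℝ) (t : ℝ) (ht : 0 < t) (z m : E)
    (hsub : ∀ v, h m + ⟪t⁻¹ • (z - m), v - m⟫ ≤ h v) :
    IsMinOn (fun v => 1 / (2 * t) * ‖v - z‖ ^ 2 + h v) Set.univ m := by
  intro v _
  simp only [Set.mem_setOf_eq]
  have ht' : t ≠ 0 := ne_of_gt ht
  have hnorm : ‖v - z‖ ^ 2 = ‖m - z‖ ^ 2 + 2 * ⟪m - z, v - m⟫ + ‖v - m‖ ^ 2 := by
    have he : v - z = (m - z) + (v - m) := by abel
    rw [he, norm_add_sq_real]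
    try ring
  have hs := hsub v
  have h5 : ⟪t⁻¹ • (z - m), v - m⟫ = t⁻¹ * ⟪z - m, v - m⟫ := real_inner_smul_left _ _ _
  have h6 : ⟪z - m, v - m⟫ = - ⟪m - z, v - m⟫ := by
    rw [← inner_neg_left]; congr 1; abel
  rw [h5, h6] at hs
  have hNpos : 0 ≤ ‖v - m‖ ^ 2 := by positivity
  have he2 : 1 / (2 * t) * (‖m - z‖ ^ 2 + 2 * ⟪m - z, v - m⟫ + ‖v - m‖ ^ 2)
      = 1 / (2 * t) * ‖m - z‖ ^ 2 + t⁻¹ * ⟪m - z, v - m⟫ + ‖v - m‖ ^ 2 / (2 * t) := by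
    field_simp; try ring
    try ring
  have h2t : 0 ≤ ‖v - m‖ ^ 2 / (2 * t) := by positivity
  rw [hnorm, he2]
  linarith

lemma prox_unique {E : Type*} [NormedAddCommGroup E] [InnerProductSpace ℝ E]
    (h : E → ℝ) (hh : ConvexOn ℝ Set.univ h) (t : ℝ) (ht : 0 < t) (z m₁ m₂ : E)
    (hm₁ : IsMinOn (fun v => 1 / (2 * t) * ‖v - z‖ ^ 2 + h v) Set.univ m₁)
    (hm₂ : IsMinOn (fun v => 1 / (2 * t) * ‖v - z‖ ^ 2 + h v) Set.univ m₂) :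
    m₁ = m₂ := by
  have h1 := prox_subgrad h hh t ht z m₁ hm₁ m₂
  have h2 := prox_subgrad h hh t ht z m₂ hm₂ m₁
  have e1 : ⟪t⁻¹ • (z - m₁), m₂ - m₁⟫ = t⁻¹ * ⟪z - m₁, m₂ - m₁⟫ := real_inner_smul_left _ _ _
  have e2 : ⟪t⁻¹ • (z - m₂), m₁ - m₂⟫ = t⁻¹ * ⟪z - m₂, m₁ - m₂⟫ := real_inner_smul_left _ _ _
  rw [e1] at h1; rw [e2] at h2
  have e3 : ⟪z - m₂, m₁ - m₂⟫ = - ⟪z - m₂, m₂ - m₁⟫ := by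
    rw [← inner_neg_right]; congr 1; abel
  rw [e3] at h2
  have e4 : ⟪z - m₁, m₂ - m₁⟫ - ⟪z - m₂, m₂ - m₁⟫ = ‖m₂ - m₁‖ ^ 2 := by
    rw [← inner_sub_left]
    have he : z - m₁ - (z - m₂) = m₂ - m₁ := by abel
    rw [he, real_inner_self_eq_norm_sq]
  have htinv : 0 < t⁻¹ := inv_pos.mpr ht
  have e5 : t⁻¹ * (⟪z - m₁, m₂ - m₁⟫ - ⟪z - m₂, m₂ - m₁⟫) = t⁻¹ * ‖m₂ - m₁‖ ^ 2 := by
    rw [e4]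
  have e6 : t⁻¹ * (⟪z - m₁, m₂ - m₁⟫ - ⟪z - m₂, m₂ - m₁⟫)
      = t⁻¹ * ⟪z - m₁, m₂ - m₁⟫ + t⁻¹ * - ⟪z - m₂, m₂ - m₁⟫ := by ring
  have hsum : t⁻¹ * ‖m₂ - m₁‖ ^ 2 ≤ 0 := by
    rw [← e5, e6]; linarith
  have hN0 : ‖m₂ - m₁‖ ^ 2 = 0 := by
    by_contra hne
    have hpos : 0 < ‖m₂ - m₁‖ ^ 2 := lt_of_le_of_ne (by positivity) (Ne.symm hne)
    have := mul_pos htinv hpos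
    linarith
  have h7 : m₂ - m₁ = 0 := by
    rwa [pow_eq_zero_iff (by norm_num), norm_eq_zero] at hN0
  exact (sub_eq_zero.mp h7).symm

lemma sqnorm_convex {E : Type*} [NormedAddCommGroup E] [InnerProductSpace ℝ E]
    (a : ℝ) (ha : 0 ≤ a) : ConvexOn ℝ Set.univ (fun v : E => a * ‖v‖ ^ 2) := by
  refine ⟨convex_univ, fun x _ y _ p q hp hq hpq => ?_⟩
  simp only
  have hexp : ‖p • x + q • y‖ ^ 2
      = p ^ 2 * ‖x‖ ^ 2 + 2 * (p * q) * ⟪x, y⟫ + q ^ 2 * ‖y‖ ^ 2 := by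
    rw [norm_add_sq_real, real_inner_smul_left, real_inner_smul_right, norm_smul, norm_smul,
      Real.norm_eq_abs, Real.norm_eq_abs, mul_pow, mul_pow, sq_abs, sq_abs]
    ring
  rw [hexp]
  simp only [smul_eq_mul]
  have hin : ⟪x, y⟫ ≤ ‖x‖ * ‖y‖ := real_inner_le_norm x y
  have hq1 : q = 1 - p := by linarith
  subst hq1
  have hp1 : (0:ℝ) ≤ 1 - p := hq
  nlinarith [mul_nonneg ha (mul_nonneg (mul_nonneg hp hp1) (sub_nonneg.mpr hin)),
    mul_nonneg ha (mul_nonneg (mul_nonneg hp hp1) (sq_nonneg (‖x‖ - ‖y‖)))]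

set_option maxHeartbeats 1000000 in
theorem stmt4 {d : ℕ} (f fstar : EuclideanSpace ℝ (Fin d) → ℝ)
    (hf : ConvexOn ℝ Set.univ f)
    (hconj : ∀ y, fstar y = ⨆ x, ((inner ℝ x y : ℝ) - f x))
    (L : ℝ) (hL : 0 < L)
    (ftil : EuclideanSpace ℝ (Fin d) → ℝ)
    (hftil : ∀ v, ftil v = fstar v - 1 / (2 * L) * ‖v‖ ^ 2)
    (hconvftil : ConvexOn ℝ Set.univ ftil)
    (ηt : ℝ) (hηt : 0 < ηt) (hratio : ηt / L < 1)
    (x p r s : EuclideanSpace ℝ (Fin d))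
    (hp : IsMinOn (fun v => 1 / (2 * ηt) * ‖v - x‖ ^ 2 + ftil v) Set.univ p)
    (hr : IsMinOn
      (fun v => 1 / (2 * (ηt⁻¹ - L⁻¹)⁻¹) * ‖v - (1 - ηt * L⁻¹)⁻¹ • x‖ ^ 2 + fstar v)
      Set.univ r)
    (hs : IsMinOn (fun v => 1 / (2 * (ηt⁻¹ - L⁻¹)) * ‖v - ηt⁻¹ • x‖ ^ 2 + f v) Set.univ s) :
    p = r ∧ (1 - ηt * L⁻¹) • p = x - ηt • s := by
  classical
  have hLne : L ≠ 0 := ne_of_gt hL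
  have hηne : ηt ≠ 0 := ne_of_gt hηt
  have hηL : ηt < L := (div_lt_one hL).mp hratio
  have hμpos : 0 < ηt⁻¹ - L⁻¹ := by
    have h1 : 1 / L < 1 / ηt := one_div_lt_one_div_of_lt hηt hηL
    rw [one_div, one_div] at h1
    linarith
  have hμne : ηt⁻¹ - L⁻¹ ≠ 0 := ne_of_gt hμpos
  have hcpos : 0 < 1 - ηt * L⁻¹ := by
    have h2 : ηt * L⁻¹ < 1 := by rw [← div_eq_mul_inv]; exact hratio
    linarith
  have hcne : 1 - ηt * L⁻¹ ≠ 0 := ne_of_gt hcpos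
  have hLη : L - ηt ≠ 0 := ne_of_gt (by linarith)
  -- fstar is convex
  have hfstarconv : ConvexOn ℝ Set.univ fstar := by
    have heq : fstar = fun v => ftil v + 1 / (2 * L) * ‖v‖ ^ 2 := by
      funext v; rw [hftil]; ring
    rw [heq]
    exact hconvftil.add (sqnorm_convex (1 / (2 * L)) (by positivity))
  -- Step 1 : p = r
  have hkey : ∀ v : EuclideanSpace ℝ (Fin d),
      1 / (2 * (ηt⁻¹ - L⁻¹)⁻¹) * ‖v - (1 - ηt * L⁻¹)⁻¹ • x‖ ^ 2 + fstar v
      = (1 / (2 * ηt) * ‖v - x‖ ^ 2 + ftil v)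
        + ((ηt⁻¹ - L⁻¹) / 2 * (((1 - ηt * L⁻¹)⁻¹) ^ 2 * ‖x‖ ^ 2)
          - 1 / (2 * ηt) * ‖x‖ ^ 2) := by
    intro v
    rw [hftil v]
    rw [norm_sub_sq_real v ((1 - ηt * L⁻¹)⁻¹ • x), real_inner_smul_right, norm_smul,
      Real.norm_eq_abs, norm_sub_sq_real v x, mul_pow, sq_abs]
    field_simp
    ring
  have hrG : IsMinOn (fun v => 1 / (2 * ηt) * ‖v - x‖ ^ 2 + ftil v) Set.univ r := by
    intro v _
    simp only [Set.mem_setOf_eq]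
    have h1 := hr (Set.mem_univ v)
    simp only [Set.mem_setOf_eq] at h1
    have e1 := hkey r
    have e2 := hkey v
    linarith only [h1, e1, e2]
  have hpr : p = r := prox_unique ftil hconvftil ηt hηt x p r hp hrG
  -- Step 2 : subgradient at s
  have hsub_s := prox_subgrad f hf (ηt⁻¹ - L⁻¹) hμpos (ηt⁻¹ • x) s hs
  set u : EuclideanSpace ℝ (Fin d) := (ηt⁻¹ - L⁻¹)⁻¹ • (ηt⁻¹ • x - s) with hudef
  -- Step 3 : fstar u = ⟪s, u⟫ - f s
  have hbd : ∀ w, (inner ℝ w u : ℝ) - f w ≤ (inner ℝ s u : ℝ) - f s := by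
    intro w
    have h1 := hsub_s w
    have hi : ⟪u, w - s⟫ = (inner ℝ w u : ℝ) - (inner ℝ s u : ℝ) := by
      rw [inner_sub_right, real_inner_comm u w, real_inner_comm u s]
    rw [hi] at h1
    linarith only [h1]
  have hub : BddAbove (Set.range fun w => (inner ℝ w u : ℝ) - f w) := by
    refine ⟨(inner ℝ s u : ℝ) - f s, ?_⟩
    rintro _ ⟨w, rfl⟩
    exact hbd w
  have hfstar_u : fstar u = (inner ℝ s u : ℝ) - f s := by
    rw [hconj u]
    exact le_antisymm (ciSup_le hbd) (le_ciSup hub s)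
  -- Step 4 : lower bound on fstar everywhere
  have hlow : ∀ v, (inner ℝ s v : ℝ) - f s ≤ fstar v := by
    intro v
    rw [hconj v]
    by_cases hB : BddAbove (Set.range fun w => (inner ℝ w v : ℝ) - f w)
    · exact le_ciSup hB s
    · exfalso
      by_cases hvu : v = u
      · exact hB (hvu ▸ hub)
      have hB2 : ¬ BddAbove (Set.range fun w => (inner ℝ w ((2:ℝ) • v - u) : ℝ) - f w) := by
        rintro ⟨M2, hM2⟩
        apply hB
        refine ⟨(1/2) * M2 + (1/2) * ((inner ℝ s u : ℝ) - f s), ?_⟩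
        rintro _ ⟨w, rfl⟩
        have hiw : (inner ℝ w ((2:ℝ) • v - u) : ℝ) = 2 * (inner ℝ w v : ℝ) - (inner ℝ w u : ℝ) := by
          rw [inner_sub_right, real_inner_smul_right]
        have e : (inner ℝ w v : ℝ) - f w
            = (1/2) * ((inner ℝ w ((2:ℝ) • v - u) : ℝ) - f w)
              + (1/2) * ((inner ℝ w u : ℝ) - f w) := by
          rw [hiw]; ring
        show (inner ℝ w v : ℝ) - f w ≤ 1/2 * M2 + 1/2 * ((inner ℝ s u : ℝ) - f s)
        rw [e]
        have h2 : (inner ℝ w ((2:ℝ) • v - u) : ℝ) - f w ≤ M2 := hM2 ⟨w, rfl⟩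
        have h3 := hbd w
        linarith only [h2, h3]
      have hB3 : ¬ BddAbove (Set.range fun w =>
          (inner ℝ w ((3:ℝ) • v - (2:ℝ) • u) : ℝ) - f w) := by
        rintro ⟨M3, hM3⟩
        apply hB
        refine ⟨(1/3) * M3 + (2/3) * ((inner ℝ s u : ℝ) - f s), ?_⟩
        rintro _ ⟨w, rfl⟩
        have hiw : (inner ℝ w ((3:ℝ) • v - (2:ℝ) • u) : ℝ)
            = 3 * (inner ℝ w v : ℝ) - 2 * (inner ℝ w u : ℝ) := by
          rw [inner_sub_right, real_inner_smul_right, real_inner_smul_right]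
        have e : (inner ℝ w v : ℝ) - f w
            = (1/3) * ((inner ℝ w ((3:ℝ) • v - (2:ℝ) • u) : ℝ) - f w)
              + (2/3) * ((inner ℝ w u : ℝ) - f w) := by
          rw [hiw]; ring
        show (inner ℝ w v : ℝ) - f w ≤ 1/3 * M3 + 2/3 * ((inner ℝ s u : ℝ) - f s)
        rw [e]
        have h2 : (inner ℝ w ((3:ℝ) • v - (2:ℝ) • u) : ℝ) - f w ≤ M3 := hM3 ⟨w, rfl⟩
        have h3 := hbd w
        linarith only [h2, h3]
      have hf1 : fstar v = 0 := by rw [hconj v]; exact Real.iSup_of_not_bddAbove hB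
      have hf2 : fstar ((2:ℝ) • v - u) = 0 := by
        rw [hconj]; exact Real.iSup_of_not_bddAbove hB2
      have hf3 : fstar ((3:ℝ) • v - (2:ℝ) • u) = 0 := by
        rw [hconj]; exact Real.iSup_of_not_bddAbove hB3
      have ht1 : ftil v = - (1 / (2 * L) * ‖v‖ ^ 2) := by rw [hftil, hf1]; ring
      have ht2 : ftil ((2:ℝ) • v - u) = - (1 / (2 * L) * ‖(2:ℝ) • v - u‖ ^ 2) := by
        rw [hftil, hf2]; ring
      have ht3 : ftil ((3:ℝ) • v - (2:ℝ) • u)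
          = - (1 / (2 * L) * ‖(3:ℝ) • v - (2:ℝ) • u‖ ^ 2) := by
        rw [hftil, hf3]; ring
      have hmid : (1/2 : ℝ) • v + (1/2 : ℝ) • ((3:ℝ) • v - (2:ℝ) • u) = (2:ℝ) • v - u := by
        module
      have hcv := hconvftil.2 (Set.mem_univ v) (Set.mem_univ ((3:ℝ) • v - (2:ℝ) • u))
        (by norm_num : (0:ℝ) ≤ 1/2) (by norm_num : (0:ℝ) ≤ 1/2) (by norm_num)
      rw [hmid, ht1, ht2, ht3] at hcv
      simp only [smul_eq_mul] at hcv
      have e1 : v = ((2:ℝ) • v - u) - (v - u) := by module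
      have e2 : (3:ℝ) • v - (2:ℝ) • u = ((2:ℝ) • v - u) + (v - u) := by module
      have hpar : ‖v‖ ^ 2 + ‖(3:ℝ) • v - (2:ℝ) • u‖ ^ 2
          = 2 * ‖(2:ℝ) • v - u‖ ^ 2 + 2 * ‖v - u‖ ^ 2 := by
        calc ‖v‖ ^ 2 + ‖(3:ℝ) • v - (2:ℝ) • u‖ ^ 2
            = ‖((2:ℝ) • v - u) - (v - u)‖ ^ 2 + ‖((2:ℝ) • v - u) + (v - u)‖ ^ 2 := by
              rw [← e1, ← e2]
          _ = 2 * ‖(2:ℝ) • v - u‖ ^ 2 + 2 * ‖v - u‖ ^ 2 := by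
              rw [norm_sub_sq_real, norm_add_sq_real]; ring
      have hpar' : 1 / (2 * L) * ‖v‖ ^ 2 + 1 / (2 * L) * ‖(3:ℝ) • v - (2:ℝ) • u‖ ^ 2
          = 1 / (2 * L) * (2 * ‖(2:ℝ) • v - u‖ ^ 2) + 1 / (2 * L) * (2 * ‖v - u‖ ^ 2) := by
        have := congrArg (fun z => 1 / (2 * L) * z) hpar
        simpa [mul_add] using this
      have hW : 1 / (2 * L) * ‖v - u‖ ^ 2 ≤ 0 := by linarith only [hcv, hpar']
      have hvne : v - u ≠ 0 := sub_ne_zero.mpr hvu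
      have hpos : 0 < ‖v - u‖ ^ 2 := by
        have := norm_pos_iff.mpr hvne
        positivity
      have hL2 : 0 < 1 / (2 * L) := by positivity
      linarith only [hW, mul_pos hL2 hpos]
  -- Step 5 : u minimizes the fstar prox objective
  have humin : IsMinOn
      (fun v => 1 / (2 * (ηt⁻¹ - L⁻¹)⁻¹) * ‖v - (1 - ηt * L⁻¹)⁻¹ • x‖ ^ 2 + fstar v)
      Set.univ u := by
    apply prox_suff fstar (ηt⁻¹ - L⁻¹)⁻¹ (inv_pos.mpr hμpos) ((1 - ηt * L⁻¹)⁻¹ • x) u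
    intro v
    have hvec : ((ηt⁻¹ - L⁻¹)⁻¹)⁻¹ • ((1 - ηt * L⁻¹)⁻¹ • x - u) = s := by
      rw [inv_inv, hudef, smul_sub, smul_smul, smul_smul]
      have hμc : (ηt⁻¹ - L⁻¹) * (1 - ηt * L⁻¹)⁻¹ = ηt⁻¹ := by
        field_simp
      have hμμ : (ηt⁻¹ - L⁻¹) * (ηt⁻¹ - L⁻¹)⁻¹ = 1 := mul_inv_cancel₀ hμne
      rw [hμc, hμμ, one_smul]
      abel
    rw [hvec]
    have hi : ⟪s, v - u⟫ = (inner ℝ s v : ℝ) - (inner ℝ s u : ℝ) := inner_sub_right s v u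
    rw [hfstar_u, hi]
    have := hlow v
    linarith only [this]
  have hru : r = u := prox_unique fstar hfstarconv (ηt⁻¹ - L⁻¹)⁻¹ (inv_pos.mpr hμpos)
    ((1 - ηt * L⁻¹)⁻¹ • x) r u hr humin
  refine ⟨hpr, ?_⟩
  rw [hpr, hru, hudef, smul_smul]
  have hcc : (1 - ηt * L⁻¹) * (ηt⁻¹ - L⁻¹)⁻¹ = ηt := by
    field_simp
  rw [hcc, smul_sub, smul_smul, mul_inv_cancel₀ hηne, one_smul]
end

section
/- Let B_0 > 0, S > 0, A_0 ≥ 0, and define recursively A_{t+1} = A_t + (B_0/(2S²))(1 + √(1 + 4S²B_0^{-1}A_t)). Then for all t ≥ 0, A_t ≥ A_0 + B_0 t²/(4S²); in particular A_t ≥ B_0 t²/(4S²). -/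
theorem stmt7 (B0 S : ℝ) (hB0 : 0 < B0) (hS : 0 < S) (A : ℕ → ℝ) (hA0 : 0 ≤ A 0)
    (hrec : ∀ t, A (t + 1) =
      A t + B0 / (2 * S ^ 2) * (1 + Real.sqrt (1 + 4 * S ^ 2 / B0 * A t))) :
    ∀ t : ℕ, A 0 + B0 * (t : ℝ) ^ 2 / (4 * S ^ 2) ≤ A t ∧
      B0 * (t : ℝ) ^ 2 / (4 * S ^ 2) ≤ A t := by
  intro t
  induction t with
  | zero => simpa using hA0
  | succ n ih =>
    obtain ⟨h1, h2⟩ := ih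
    have hS2 : (0:ℝ) < S ^ 2 := by positivity
    have hAn : 0 ≤ A n := le_trans (by positivity) h2
    have hsq : ((n:ℝ)) ≤ Real.sqrt (1 + 4 * S ^ 2 / B0 * A n) := by
      have h4 : B0 * (n:ℝ) ^ 2 ≤ A n * (4 * S ^ 2) :=
        (div_le_iff₀ (by positivity)).mp h2
      have hx : (n:ℝ)^2 ≤ 1 + 4 * S ^ 2 / B0 * A n := by
        have h6 : (n:ℝ)^2 ≤ 4 * S ^ 2 / B0 * A n := by
          rw [div_mul_eq_mul_div, le_div_iff₀ hB0]
          nlinarith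
        linarith
      have hpos : (0:ℝ) ≤ 1 + 4 * S ^ 2 / B0 * A n := le_trans (by positivity) hx
      rw [Real.le_sqrt (by positivity) hpos]
      exact hx
    have key : A 0 + B0 * (n : ℝ) ^ 2 / (4 * S ^ 2) + B0 / (2 * S ^ 2) * (1 + n)
        ≤ A (n + 1) := by
      rw [hrec n]
      have hc : 0 < B0 / (2 * S ^ 2) := by positivity
      nlinarith [mul_le_mul_of_nonneg_left hsq hc.le]
    have harith : A 0 + B0 * ((n : ℝ) + 1) ^ 2 / (4 * S ^ 2) ≤
        A 0 + B0 * (n : ℝ) ^ 2 / (4 * S ^ 2) + B0 / (2 * S ^ 2) * (1 + n) := by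
      have he : B0 / (2 * S ^ 2) * (1 + (n:ℝ)) = B0 * (2 * ((n:ℝ) + 1)) / (4 * S ^ 2) := by
        field_simp; ring
      rw [he]
      have hnum : B0 * ((n:ℝ) + 1) ^ 2 ≤ B0 * (n:ℝ) ^ 2 + B0 * (2 * ((n:ℝ) + 1)) := by
        nlinarith
      have h5 : B0 * ((n:ℝ) + 1) ^ 2 / (4 * S ^ 2) ≤
          (B0 * (n:ℝ) ^ 2 + B0 * (2 * ((n:ℝ) + 1))) / (4 * S ^ 2) := by
        gcongr
      rw [add_div] at h5
      linarith
    constructor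
    · push_cast
      linarith
    · push_cast
      linarith [hA0]
end

section
/- Let 0 ≤ α ≤ 1, n ≥ 2, and consider the polynomial Q(θ) = sin(nθ) − (1−α) sin((n−1)θ) for θ ∈ (0, π/2]. Then any root θ of Q in (0, π/2] satisfies θ ≥ π/(2n). -/
theorem stmt11 (α : ℝ) (hα0 : 0 ≤ α) (hα1 : α ≤ 1) (n : ℕ) (hn : 2 ≤ n)
    (θ : ℝ) (hθ : θ ∈ Set.Ioc 0 (Real.pi / 2))
    (hroot : Real.sin (n * θ) - (1 - α) * Real.sin (((n - 1 : ℕ) : ℝ) * θ) = 0) :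
    Real.pi / (2 * n) ≤ θ := by
  obtain ⟨hθ0, hθ2⟩ := hθ
  by_contra h
  push_neg at h
  have hn0 : (0:ℝ) < n := by positivity
  have hcast : ((n - 1 : ℕ) : ℝ) = (n : ℝ) - 1 := by
    have : 1 ≤ n := by omega
    push_cast [this]; ring
  rw [hcast] at hroot
  have hnθ : (n : ℝ) * θ < Real.pi / 2 := by
    have := (lt_div_iff₀ (by positivity : (0:ℝ) < 2 * n)).mp h
    nlinarith [this]
  have h1 : (0:ℝ) ≤ ((n:ℝ) - 1) * θ := by
    have : (1:ℝ) ≤ n := by exact_mod_cast (by omega : 1 ≤ n)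
    nlinarith
  have hlt : ((n:ℝ) - 1) * θ < (n:ℝ) * θ := by nlinarith
  have hmono := Real.strictMonoOn_sin (a := ((n:ℝ) - 1) * θ) (b := (n:ℝ) * θ)
    ⟨by linarith [Real.pi_pos], le_of_lt (lt_of_lt_of_le hlt hnθ.le)⟩
    ⟨by linarith [Real.pi_pos, h1, hlt], hnθ.le⟩ hlt
  have hs0 : 0 ≤ Real.sin (((n:ℝ) - 1) * θ) := Real.sin_nonneg_of_nonneg_of_le_pi h1
    (by linarith [Real.pi_pos, Real.pi_gt_three])
  nlinarith [hmono, hs0]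
end
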